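/- Let t = (t₁,t₂,t₃) ∈ ℕ³, k = t₁+t₂+t₃+2, and let w ≥ k be an integer. Define the exact comparison toll e_n = (n−k)·(1 + (t₂+1)/(k+1)) + ((2t₁+t₂+3)(t₃+1)/((k+1)(k+2)))·(n−k−1) + 3(t₃+1)/(k+1) for n > w. Then any sequence (C_n) with arbitrary fixed values for n ≤ w and C_n = e_n + Σ_{j=0}^{n−2} w_{n,j}·C_j for n > w satisfies C_n / (n·ln n) → a_C / H(t) as n → ∞, where a_C = 1 + (t₂+1)/(k+1) + (2t₁+t₂+3)(t₃+1)/((k+1)(k+2)). -/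

import Mathlib

open Finset Filter Real Asymptotics

/-- The `n`-th harmonic number `H_n = ∑_{i=1}^n 1/i`. -/
noncomputable def harm (n : ℕ) : ℝ := ∑ i ∈ Finset.range n, (1 : ℝ) / (i + 1)

/-- The discrete entropy `H(t)` of `t = (t₁,t₂,t₃)` with `k = t₁+t₂+t₃+2`. -/
noncomputable def Hdisc (t1 t2 t3 : ℕ) : ℝ :=
  ((t1 : ℝ) + 1) / ((t1 : ℝ) + t2 + t3 + 3) * (harm (t1 + t2 + t3 + 3) - harm (t1 + 1))
  + ((t2 : ℝ) + 1) / ((t1 : ℝ) + t2 + t3 + 3) * (harm (t1 + t2 + t3 + 3) - harm (t2 + 1))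
  + ((t3 : ℝ) + 1) / ((t1 : ℝ) + t2 + t3 + 3) * (harm (t1 + t2 + t3 + 3) - harm (t3 + 1))

/-- Rising factorial `a^{(m)} = a (a+1) ⋯ (a+m−1)`. -/
def ascNat (a m : ℕ) : ℕ := ∏ i ∈ Finset.range m, (a + i)

/-- `π_l(N, i) = binom(N,i) (t+1)^{(i)} (k−t)^{(N−i)} / (k+1)^{(N)}` for `0 ≤ i ≤ N`, else `0`. -/
noncomputable def piw (t k N : ℕ) (i : ℤ) : ℝ :=
  if 0 ≤ i ∧ i ≤ (N : ℤ) then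
    (N.choose i.toNat : ℝ) * (ascNat (t + 1) i.toNat : ℝ)
      * (ascNat (k - t) (N - i.toNat) : ℝ) / (ascNat (k + 1) N : ℝ)
  else 0

/-- The recurrence weights `w_{n,j} = ∑_{l=1}^3 π_l(n−k, j−t_l)`. -/
noncomputable def wgt (t1 t2 t3 n j : ℕ) : ℝ :=
  piw t1 (t1 + t2 + t3 + 2) (n - (t1 + t2 + t3 + 2)) ((j : ℤ) - t1)
  + piw t2 (t1 + t2 + t3 + 2) (n - (t1 + t2 + t3 + 2)) ((j : ℤ) - t2)
  + piw t3 (t1 + t2 + t3 + 2) (n - (t1 + t2 + t3 + 2)) ((j : ℤ) - t3)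

open Topology

lemma ascNat_zero (a : ℕ) : ascNat a 0 = 1 := by simp [ascNat]
lemma ascNat_succ (a m : ℕ) : ascNat a (m+1) = ascNat a m * (a + m) := by
  simp [ascNat, Finset.prod_range_succ]
lemma ascNat_pos (a m : ℕ) (ha : 0 < a) : 0 < ascNat a m := by
  induction m with
  | zero => simp [ascNat_zero]
  | succ m ih => rw [ascNat_succ]; positivity

noncomputable def p (t k N i : ℕ) : ℝ :=
  (N.choose i : ℝ) * (ascNat (t+1) i : ℝ) * (ascNat (k - t) (N - i) : ℝ) / (ascNat (k+1) N : ℝ)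

lemma p_nonneg (t k N i : ℕ) : 0 ≤ p t k N i := by
  unfold p; positivity

lemma p_eq_zero (t k N i : ℕ) (h : N < i) : p t k N i = 0 := by
  unfold p; rw [Nat.choose_eq_zero_of_lt h]; simp

lemma ascNat_ne (k N : ℕ) : (ascNat (k+1) N : ℝ) ≠ 0 := by
  exact_mod_cast (ascNat_pos (k+1) N (Nat.succ_pos k)).ne'

lemma p_urn_zero (t k N : ℕ) :
    p t k (N+1) 0 * ((k:ℝ) + 1 + N) = p t k N 0 * (((k - t : ℕ):ℝ) + N) := by
  unfold p
  rw [Nat.choose_zero_right, Nat.choose_zero_right, Nat.sub_zero, Nat.sub_zero,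
    ascNat_succ (k-t) N, ascNat_succ (k+1) N]
  have h1 := ascNat_ne k N
  push_cast
  field_simp

lemma p_urn_succ (t k N i : ℕ) :
    p t k (N+1) (i+1) * ((k:ℝ) + 1 + N)
      = p t k N (i+1) * (((k - t : ℕ):ℝ) + N - (i+1)) + p t k N i * ((t:ℝ) + 1 + i) := by
  have h1 := ascNat_ne k N
  rcases lt_trichotomy (i+1) (N+1) with h | h | h
  · -- i + 1 ≤ N
    have hiN : i + 1 ≤ N := Nat.lt_succ_iff.mp h
    unfold p
    rw [Nat.choose_succ_succ N i]
    have e1 : N + 1 - (i+1) = (N - (i+1)) + 1 := by omega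
    have e2 : N - i = (N - (i+1)) + 1 := by omega
    rw [e1, e2, ascNat_succ (k-t) (N - (i+1)), ascNat_succ (t+1) i,
      ascNat_succ (k+1) N]
    have e3 : (((k - t : ℕ):ℝ) + N - (i+1)) = (((k - t) + (N - (i+1)) : ℕ) : ℝ) := by
      push_cast [Nat.cast_sub hiN, Nat.cast_sub (le_of_lt h)]
      ring
    rw [e3]
    push_cast
    field_simp
    ring
  · -- i = N
    have hiN : i = N := by omega
    subst hiN
    unfold p
    simp only [Nat.choose_self, Nat.choose_succ_self, Nat.sub_self, ascNat_zero,
      ascNat_succ (t+1) i, ascNat_succ (k+1) i, Nat.add_sub_cancel]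
    push_cast
    field_simp
    ring
  · -- i + 1 > N + 1
    rw [p_eq_zero t k (N+1) (i+1) (by omega), p_eq_zero t k N (i+1) (by omega),
      p_eq_zero t k N i (by omega)]
    ring

lemma transfer (t k N : ℕ) (ψ : ℕ → ℝ) :
    (∑ i ∈ Finset.range (N+2), p t k (N+1) i * ψ i) * ((k:ℝ) + 1 + N)
      = ∑ i ∈ Finset.range (N+1),
          p t k N i * ((((k - t : ℕ):ℝ) + N - i) * ψ i + ((t:ℝ) + 1 + i) * ψ (i+1)) := by
  rw [Finset.sum_mul, Finset.sum_range_succ' (fun i => p t k (N+1) i * ψ i * ((k:ℝ)+1+N)) (N+1)]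
  have h0 : p t k (N+1) 0 * ψ 0 * ((k:ℝ)+1+N) = p t k N 0 * ((((k-t:ℕ):ℝ) + N - 0) * ψ 0) := by
    have h := p_urn_zero t k N
    linear_combination ψ 0 * h
  have hsucc : ∀ i, p t k (N+1) (i+1) * ψ (i+1) * ((k:ℝ)+1+N)
      = p t k N (i+1) * ((((k-t:ℕ):ℝ) + N - (i+1)) * ψ (i+1))
        + p t k N i * (((t:ℝ)+1+i) * ψ (i+1)) := by
    intro i
    have h := p_urn_succ t k N i
    linear_combination ψ (i+1) * h
  calc (∑ i ∈ Finset.range (N+1), p t k (N+1) (i+1) * ψ (i+1) * ((k:ℝ)+1+N))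
        + p t k (N+1) 0 * ψ 0 * ((k:ℝ)+1+N)
      = (∑ i ∈ Finset.range (N+1),
          (p t k N (i+1) * ((((k-t:ℕ):ℝ) + N - (i+1)) * ψ (i+1))
            + p t k N i * (((t:ℝ)+1+i) * ψ (i+1))))
        + p t k N 0 * ((((k-t:ℕ):ℝ) + N - 0) * ψ 0) := by
        rw [h0]; congr 1; exact Finset.sum_congr rfl (fun i _ => hsucc i)
    _ = ((∑ i ∈ Finset.range (N+1), p t k N (i+1) * ((((k-t:ℕ):ℝ) + N - (i+1)) * ψ (i+1)))
          + p t k N 0 * ((((k-t:ℕ):ℝ) + N - 0) * ψ 0))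
        + ∑ i ∈ Finset.range (N+1), p t k N i * (((t:ℝ)+1+i) * ψ (i+1)) := by
        rw [Finset.sum_add_distrib]; ring
    _ = (∑ i ∈ Finset.range (N+2), p t k N i * ((((k-t:ℕ):ℝ) + N - i) * ψ i))
        + ∑ i ∈ Finset.range (N+1), p t k N i * (((t:ℝ)+1+i) * ψ (i+1)) := by
        rw [Finset.sum_range_succ' (fun i => p t k N i * ((((k-t:ℕ):ℝ) + N - i) * ψ i)) (N+1)]
        push_cast; ring
    _ = ∑ i ∈ Finset.range (N+1),
          p t k N i * ((((k - t : ℕ):ℝ) + N - i) * ψ i + ((t:ℝ) + 1 + i) * ψ (i+1)) := by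
        rw [Finset.sum_range_succ (fun i => p t k N i * ((((k-t:ℕ):ℝ) + N - i) * ψ i)) (N+1),
          p_eq_zero t k N (N+1) (by omega)]
        simp only [zero_mul, add_zero]
        rw [← Finset.sum_add_distrib]
        exact Finset.sum_congr rfl (fun i _ => by ring)

lemma p_zero_zero (t k : ℕ) : p t k 0 0 = 1 := by
  unfold p; simp [ascNat_zero]

lemma kN_ne (k N : ℕ) : ((k:ℝ) + 1 + N) ≠ 0 := by positivity

lemma p_mass (t k : ℕ) (ht : t ≤ k) : ∀ N, ∑ i ∈ Finset.range (N+1), p t k N i = 1 := by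
  intro N
  induction N with
  | zero => simp [p_zero_zero]
  | succ N ih =>
    have h := transfer t k N (fun _ => 1)
    simp only [mul_one] at h
    have hc : ∀ i ∈ Finset.range (N+1),
        p t k N i * ((((k - t : ℕ):ℝ) + N - i) + ((t:ℝ) + 1 + i))
          = p t k N i * ((k:ℝ) + 1 + N) := by
      intro i _
      have : ((k - t : ℕ):ℝ) = (k:ℝ) - t := by
        rw [Nat.cast_sub ht]
      rw [this]; ring
    rw [Finset.sum_congr rfl hc, ← Finset.sum_mul, ih, one_mul] at h
    have := kN_ne k N
    field_simp at h
    simpa using h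

lemma p_mean (t k : ℕ) (ht : t ≤ k) : ∀ N,
    ∑ i ∈ Finset.range (N+1), p t k N i * ((t:ℝ) + 1 + i)
      = ((t:ℝ) + 1) * ((k:ℝ) + 1 + N) / ((k:ℝ) + 1) := by
  intro N
  induction N with
  | zero => simp [p_zero_zero]; field_simp
  | succ N ih =>
    have h := transfer t k N (fun i => (t:ℝ) + 1 + i)
    have hc : ∀ i ∈ Finset.range (N+1),
        p t k N i * ((((k - t : ℕ):ℝ) + N - i) * ((t:ℝ) + 1 + i)
            + ((t:ℝ) + 1 + i) * ((t:ℝ) + 1 + (i+1:ℕ)))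
          = p t k N i * ((t:ℝ) + 1 + i) * ((k:ℝ) + 2 + N) := by
      intro i _
      have hs : ((k - t : ℕ):ℝ) = (k:ℝ) - t := by rw [Nat.cast_sub ht]
      rw [hs]; push_cast; ring
    rw [Finset.sum_congr rfl hc, ← Finset.sum_mul, ih] at h
    have h1 := kN_ne k N
    have h2 : ((k:ℝ) + 1) ≠ 0 := by positivity
    field_simp at h ⊢
    push_cast at h ⊢
    linear_combination h

lemma harm_succ (n : ℕ) : harm (n+1) = harm n + 1 / ((n:ℝ)+1) := by
  simp [harm, Finset.sum_range_succ]

lemma p_harm (t k : ℕ) (ht : t ≤ k) : ∀ N,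
    ∑ i ∈ Finset.range (N+1), p t k N i * (((t:ℝ) + 1 + i) * harm (t+1+i))
      = ((t:ℝ) + 1) / ((k:ℝ) + 1) * ((k:ℝ) + 1 + N)
          * (harm (t+1) + harm (k+1+N) - harm (k+1)) := by
  intro N
  induction N with
  | zero => simp [p_zero_zero]; field_simp; simp
  | succ N ih =>
    have h := transfer t k N (fun i => ((t:ℝ) + 1 + i) * harm (t+1+i))
    have hc : ∀ i ∈ Finset.range (N+1),
        p t k N i * ((((k - t : ℕ):ℝ) + N - i) * (((t:ℝ) + 1 + i) * harm (t+1+i))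
            + ((t:ℝ) + 1 + i) * (((t:ℝ) + 1 + (i+1:ℕ)) * harm (t+1+(i+1))))
          = p t k N i * (((t:ℝ) + 1 + i) * harm (t+1+i)) * ((k:ℝ) + 2 + N)
            + p t k N i * ((t:ℝ) + 1 + i) := by
      intro i _
      have hs : ((k - t : ℕ):ℝ) = (k:ℝ) - t := by rw [Nat.cast_sub ht]
      have e : t + 1 + (i + 1) = (t + 1 + i) + 1 := by omega
      rw [hs, e, harm_succ (t+1+i)]
      have hne : ((t:ℝ) + 1 + i) + 1 ≠ 0 := by positivity
      have hcast : ((t + 1 + i : ℕ):ℝ) = (t:ℝ) + 1 + i := by push_cast; ring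
      rw [hcast]
      push_cast
      field_simp
      ring
    rw [Finset.sum_congr rfl hc, Finset.sum_add_distrib, ← Finset.sum_mul, ih,
      p_mean t k ht N] at h
    have h1 := kN_ne k N
    have h2 : ((k:ℝ) + 1) ≠ 0 := by positivity
    have e2 : k + 1 + (N+1) = (k+1+N) + 1 := by omega
    rw [e2, harm_succ (k+1+N)]
    have hcast2 : ((k + 1 + N : ℕ):ℝ) = (k:ℝ) + 1 + N := by push_cast; ring
    rw [hcast2]
    have hne2 : ((k:ℝ) + 1 + N) + 1 ≠ 0 := by positivity
    apply mul_right_cancel₀ h1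
    rw [show N+1+1 = N+2 from rfl, h]
    field_simp
    push_cast
    ring

lemma piw_eq_p (t k N j : ℕ) (hj : t ≤ j) : piw t k N ((j:ℤ) - t) = p t k N (j - t) := by
  unfold piw
  rcases le_or_gt (j - t) N with h | h
  · rw [if_pos ⟨by omega, by omega⟩]
    have : ((j:ℤ) - t).toNat = j - t := by omega
    rw [this]; rfl
  · rw [if_neg (by omega), p_eq_zero t k N (j-t) h]

lemma piw_eq_zero (t k N j : ℕ) (hj : j < t) : piw t k N ((j:ℤ) - t) = 0 := by
  unfold piw
  rw [if_neg (by omega)]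

lemma sum_piw_phi (t k n : ℕ) (ht : t + 2 ≤ k) (hn : k ≤ n) (φ : ℕ → ℝ) :
    ∑ j ∈ Finset.range (n-1), piw t k (n-k) ((j:ℤ) - t) * φ j
      = ∑ i ∈ Finset.range (n-k+1), p t k (n-k) i * φ (t+i) := by
  have h1 : ∑ j ∈ Finset.range (n-1), piw t k (n-k) ((j:ℤ) - t) * φ j
      = ∑ j ∈ Finset.Ico t (n-1), piw t k (n-k) ((j:ℤ) - t) * φ j := by
    rw [Finset.range_eq_Ico, ← Finset.sum_Ico_consecutive _ (Nat.zero_le t) (by omega)]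
    have : ∑ j ∈ Finset.Ico 0 t, piw t k (n-k) ((j:ℤ) - t) * φ j = 0 := by
      apply Finset.sum_eq_zero
      intro j hj
      rw [Finset.mem_Ico] at hj
      rw [piw_eq_zero t k (n-k) j hj.2, zero_mul]
    rw [this, zero_add]
  rw [h1, Finset.sum_Ico_eq_sum_range]
  have h2 : ∀ i ∈ Finset.range (n-1-t), piw t k (n-k) (((t+i : ℕ):ℤ) - t) * φ (t+i)
      = p t k (n-k) i * φ (t+i) := by
    intro i _
    rw [piw_eq_p t k (n-k) (t+i) (by omega)]
    congr 2
    omega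
  rw [Finset.sum_congr rfl h2]
  symm
  apply Finset.sum_subset (Finset.range_subset_range.mpr (by omega))
  intro i _ hi
  rw [Finset.mem_range, not_lt] at hi
  rw [p_eq_zero t k (n-k) i (by omega), zero_mul]

lemma sum_wgt_phi (t1 t2 t3 k n : ℕ) (hk : k = t1 + t2 + t3 + 2) (hn : k ≤ n) (φ : ℕ → ℝ) :
    ∑ j ∈ Finset.range (n-1), wgt t1 t2 t3 n j * φ j
      = (∑ i ∈ Finset.range (n-k+1), p t1 k (n-k) i * φ (t1+i))
        + (∑ i ∈ Finset.range (n-k+1), p t2 k (n-k) i * φ (t2+i))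
        + (∑ i ∈ Finset.range (n-k+1), p t3 k (n-k) i * φ (t3+i)) := by
  subst hk
  rw [← sum_piw_phi t1 _ n (by omega) hn φ, ← sum_piw_phi t2 _ n (by omega) hn φ,
    ← sum_piw_phi t3 _ n (by omega) hn φ, ← Finset.sum_add_distrib, ← Finset.sum_add_distrib]
  apply Finset.sum_congr rfl
  intro j _
  unfold wgt
  ring

lemma W0 (t1 t2 t3 k n : ℕ) (hk : k = t1 + t2 + t3 + 2) (hn : k ≤ n) :
    ∑ j ∈ Finset.range (n-1), wgt t1 t2 t3 n j = 3 := by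
  have h := sum_wgt_phi t1 t2 t3 k n hk hn (fun _ => 1)
  simp only [mul_one] at h
  rw [p_mass t1 k (by omega), p_mass t2 k (by omega), p_mass t3 k (by omega)] at h
  rw [h]; norm_num

lemma cast_sub_k (k n : ℕ) (hn : k ≤ n) : ((n - k : ℕ):ℝ) = (n:ℝ) - k := by
  rw [Nat.cast_sub hn]

lemma W1 (t1 t2 t3 k n : ℕ) (hk : k = t1 + t2 + t3 + 2) (hn : k ≤ n) :
    ∑ j ∈ Finset.range (n-1), wgt t1 t2 t3 n j * ((j:ℝ) + 1) = (n:ℝ) + 1 := by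
  have h := sum_wgt_phi t1 t2 t3 k n hk hn (fun j => (j:ℝ) + 1)
  have hmean : ∀ t : ℕ, t + 2 ≤ k →
      ∑ i ∈ Finset.range (n-k+1), p t k (n-k) i * (((t+i : ℕ):ℝ) + 1)
        = ((t:ℝ) + 1) * ((n:ℝ) + 1) / ((k:ℝ) + 1) := by
    intro t ht
    have hc : ∀ i ∈ Finset.range (n-k+1),
        p t k (n-k) i * (((t+i : ℕ):ℝ) + 1) = p t k (n-k) i * ((t:ℝ) + 1 + i) := by
      intro i _; push_cast; ring
    rw [Finset.sum_congr rfl hc, p_mean t k (by omega) (n-k), cast_sub_k k n hn]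
    ring_nf
  rw [hmean t1 (by omega), hmean t2 (by omega), hmean t3 (by omega)] at h
  rw [h]
  have h2 : ((k:ℝ) + 1) ≠ 0 := by positivity
  have hcast : (k:ℝ) = (t1:ℝ) + t2 + t3 + 2 := by rw [hk]; push_cast; ring
  field_simp
  rw [hcast]; ring

lemma W2 (t1 t2 t3 k n : ℕ) (hk : k = t1 + t2 + t3 + 2) (hn : k ≤ n) :
    ∑ j ∈ Finset.range (n-1), wgt t1 t2 t3 n j * (((j:ℝ) + 1) * harm (j+1))
      = ((n:ℝ) + 1) * harm (n+1) - ((n:ℝ) + 1) * Hdisc t1 t2 t3 := by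
  have h := sum_wgt_phi t1 t2 t3 k n hk hn (fun j => ((j:ℝ) + 1) * harm (j+1))
  have hharm : ∀ t : ℕ, t + 2 ≤ k →
      ∑ i ∈ Finset.range (n-k+1), p t k (n-k) i * ((((t+i : ℕ):ℝ) + 1) * harm ((t+i)+1))
        = ((t:ℝ) + 1) / ((k:ℝ) + 1) * ((n:ℝ) + 1)
          * (harm (t+1) + harm (n+1) - harm (k+1)) := by
    intro t ht
    have hc : ∀ i ∈ Finset.range (n-k+1),
        p t k (n-k) i * ((((t+i : ℕ):ℝ) + 1) * harm ((t+i)+1))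
          = p t k (n-k) i * (((t:ℝ) + 1 + i) * harm (t+1+i)) := by
      intro i _
      have e : t + i + 1 = t + 1 + i := by omega
      rw [e]; push_cast; ring
    rw [Finset.sum_congr rfl hc, p_harm t k (by omega) (n-k), cast_sub_k k n hn]
    have e2 : k + 1 + (n - k) = n + 1 := by omega
    rw [e2]
    ring_nf
  rw [hharm t1 (by omega), hharm t2 (by omega), hharm t3 (by omega)] at h
  rw [h]
  unfold Hdisc
  have e3 : t1 + t2 + t3 + 3 = k + 1 := by omega
  have e4 : ((t1:ℝ) + t2 + t3 + 3) = (k:ℝ) + 1 := by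
    rw [hk]; push_cast; ring
  rw [e3, e4]
  have h2 : ((k:ℝ) + 1) ≠ 0 := by positivity
  have hcast : (k:ℝ) = (t1:ℝ) + t2 + t3 + 2 := by rw [hk]; push_cast; ring
  field_simp
  rw [hcast]; ring


lemma piw_nonneg (t k N : ℕ) (i : ℤ) : 0 ≤ piw t k N i := by
  unfold piw
  split
  · positivity
  · exact le_refl 0

lemma wgt_nonneg (t1 t2 t3 n j : ℕ) : 0 ≤ wgt t1 t2 t3 n j := by
  unfold wgt
  have h1 := piw_nonneg t1 (t1+t2+t3+2) (n - (t1+t2+t3+2)) ((j:ℤ) - t1)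
  have h2 := piw_nonneg t2 (t1+t2+t3+2) (n - (t1+t2+t3+2)) ((j:ℤ) - t2)
  have h3 := piw_nonneg t3 (t1+t2+t3+2) (n - (t1+t2+t3+2)) ((j:ℤ) - t3)
  linarith

lemma harm_lt (a b : ℕ) (h : a < b) : harm a < harm b := by
  unfold harm
  apply Finset.sum_lt_sum_of_subset (Finset.range_subset_range.mpr h.le)
    (i := a) (by simp [Finset.mem_range, h]) (by simp)
  · positivity
  · intro j _ _; positivity

lemma Hdisc_pos (t1 t2 t3 : ℕ) : 0 < Hdisc t1 t2 t3 := by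
  unfold Hdisc
  have hd : (0:ℝ) < (t1:ℝ) + t2 + t3 + 3 := by positivity
  have p1 : (0:ℝ) < ((t1:ℝ) + 1) / ((t1:ℝ) + t2 + t3 + 3) := by positivity
  have p2 : (0:ℝ) < ((t2:ℝ) + 1) / ((t1:ℝ) + t2 + t3 + 3) := by positivity
  have p3 : (0:ℝ) < ((t3:ℝ) + 1) / ((t1:ℝ) + t2 + t3 + 3) := by positivity
  have q1 : 0 < harm (t1 + t2 + t3 + 3) - harm (t1 + 1) :=
    sub_pos.mpr (harm_lt _ _ (by omega))
  have q2 : 0 < harm (t1 + t2 + t3 + 3) - harm (t2 + 1) :=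
    sub_pos.mpr (harm_lt _ _ (by omega))
  have q3 : 0 < harm (t1 + t2 + t3 + 3) - harm (t3 + 1) :=
    sub_pos.mpr (harm_lt _ _ (by omega))
  positivity

lemma harm_eq_harmonic (n : ℕ) : harm n = ((harmonic n : ℚ) : ℝ) := by
  unfold harm harmonic
  push_cast
  simp [one_div]

lemma tendsto_harm_sub_log :
    Tendsto (fun n : ℕ => harm n - Real.log n) atTop (𝓝 Real.eulerMascheroniConstant) := by
  have := Real.tendsto_harmonic_sub_log
  apply this.congr
  intro n
  rw [harm_eq_harmonic]

lemma tendsto_inv_log :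
    Tendsto (fun n : ℕ => 1 / Real.log n) atTop (𝓝 0) := by
  simp only [one_div]
  exact tendsto_inv_atTop_zero.comp (Real.tendsto_log_atTop.comp tendsto_natCast_atTop_atTop)

lemma tendsto_succ_div : Tendsto (fun n : ℕ => ((n:ℝ) + 1) / n) atTop (𝓝 1) := by
  have h : Tendsto (fun n : ℕ => 1 + 1 / (n:ℝ)) atTop (𝓝 (1 + 0)) :=
    tendsto_const_nhds.add (tendsto_one_div_atTop_nhds_zero_nat)
  rw [add_zero] at h
  apply h.congr'
  filter_upwards [eventually_gt_atTop 0] with n hn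
  have : (n:ℝ) ≠ 0 := Nat.cast_ne_zero.mpr hn.ne'
  field_simp

lemma tendsto_log_succ_div_log :
    Tendsto (fun n : ℕ => Real.log ((n:ℝ) + 1) / Real.log n) atTop (𝓝 1) := by
  have h1 : Tendsto (fun n : ℕ => Real.log (((n:ℝ) + 1) / n)) atTop (𝓝 0) := by
    have := (Real.continuousAt_log one_ne_zero).tendsto.comp tendsto_succ_div
    simpa [Function.comp_def] using this
  have h2 : Tendsto (fun n : ℕ => Real.log (((n:ℝ) + 1) / n) * (1 / Real.log n) + 1)
      atTop (𝓝 (0 * 0 + 1)) := (h1.mul tendsto_inv_log).add tendsto_const_nhds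
  rw [zero_mul, zero_add] at h2
  apply h2.congr'
  filter_upwards [eventually_ge_atTop 2] with n hn
  have hn0 : (n:ℝ) ≠ 0 := by positivity
  have hlog : Real.log n ≠ 0 := by
    have : (1:ℝ) < (n:ℝ) := by exact_mod_cast (by omega : 1 < n)
    exact (Real.log_pos this).ne'
  rw [Real.log_div (by positivity) hn0]
  field_simp
  ring

lemma tendsto_harm_div_log :
    Tendsto (fun n : ℕ => harm (n+1) / Real.log n) atTop (𝓝 1) := by
  have h1 : Tendsto (fun n : ℕ => harm (n+1) - Real.log ((n:ℝ)+1)) atTop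
      (𝓝 Real.eulerMascheroniConstant) := by
    have := tendsto_harm_sub_log.comp (tendsto_add_atTop_nat 1)
    apply this.congr
    intro n
    simp only [Function.comp_apply]
    push_cast
    ring_nf
  have h2 : Tendsto (fun n : ℕ =>
      (harm (n+1) - Real.log ((n:ℝ)+1)) * (1 / Real.log n)
        + Real.log ((n:ℝ)+1) / Real.log n) atTop (𝓝 (Real.eulerMascheroniConstant * 0 + 1)) :=
    (h1.mul tendsto_inv_log).add tendsto_log_succ_div_log
  rw [mul_zero, zero_add] at h2
  apply h2.congr
  intro n
  rw [mul_one_div, ← add_div, sub_add_cancel]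

lemma tendsto_main :
    Tendsto (fun n : ℕ => ((n:ℝ) + 1) * harm (n+1) / ((n:ℝ) * Real.log n)) atTop (𝓝 1) := by
  have h := tendsto_succ_div.mul tendsto_harm_div_log
  rw [mul_one] at h
  apply h.congr
  intro n
  rw [div_mul_div_comm]

lemma tendsto_inv_nlog :
    Tendsto (fun n : ℕ => 1 / ((n:ℝ) * Real.log n)) atTop (𝓝 0) := by
  simp only [one_div]
  apply Tendsto.comp tendsto_inv_atTop_zero
  apply Tendsto.atTop_mul_atTop₀ tendsto_natCast_atTop_atTop
  exact Real.tendsto_log_atTop.comp tendsto_natCast_atTop_atTop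


theorem stmt1 (t1 t2 t3 w k : ℕ) (hk : k = t1 + t2 + t3 + 2) (hw : k ≤ w)
    (C : ℕ → ℝ)
    (hrec : ∀ n : ℕ, w < n →
      C n = ((n : ℝ) - k) * (1 + ((t2 : ℝ) + 1) / ((k : ℝ) + 1))
          + (2 * (t1 : ℝ) + t2 + 3) * ((t3 : ℝ) + 1) / (((k : ℝ) + 1) * ((k : ℝ) + 2))
              * ((n : ℝ) - k - 1)
          + 3 * ((t3 : ℝ) + 1) / ((k : ℝ) + 1)
          + ∑ j ∈ Finset.range (n - 1), wgt t1 t2 t3 n j * C j) :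
    Tendsto (fun n : ℕ => C n / ((n : ℝ) * Real.log n)) atTop
      (nhds ((1 + ((t2 : ℝ) + 1) / ((k : ℝ) + 1)
              + (2 * (t1 : ℝ) + t2 + 3) * ((t3 : ℝ) + 1) / (((k : ℝ) + 1) * ((k : ℝ) + 2)))
            / Hdisc t1 t2 t3)) := by
  have hk1 : ((k:ℝ)+1) ≠ 0 := by positivity
  have hk2 : ((k:ℝ)+2) ≠ 0 := by positivity
  have hHpos := Hdisc_pos t1 t2 t3
  have hHne : Hdisc t1 t2 t3 ≠ 0 := hHpos.ne'
  set H := Hdisc t1 t2 t3 with hH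
  set a : ℝ := 1 + ((t2:ℝ)+1)/((k:ℝ)+1)
      + (2*(t1:ℝ)+t2+3)*((t3:ℝ)+1)/(((k:ℝ)+1)*((k:ℝ)+2)) with ha
  set α : ℝ := a / H with hα
  set γ : ℝ := ((1 + ((t2:ℝ)+1)/((k:ℝ)+1))*((k:ℝ)+1)
      + (2*(t1:ℝ)+t2+3)*((t3:ℝ)+1)/(((k:ℝ)+1)*((k:ℝ)+2))*((k:ℝ)+2)
      - 3*((t3:ℝ)+1)/((k:ℝ)+1))/2 with hγ
  have hαH : α * H = a := div_mul_cancel₀ a hHne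
  -- the exact solution residual
  have hD : ∀ n : ℕ, w < n →
      C n - (α * ((n:ℝ)+1) * harm (n+1) + γ)
        = ∑ j ∈ Finset.range (n-1),
            wgt t1 t2 t3 n j * (C j - (α * ((j:ℝ)+1) * harm (j+1) + γ)) := by
    intro n hn
    have hkn : k ≤ n := le_trans hw (le_of_lt hn)
    have hW0 := W0 t1 t2 t3 k n hk hkn
    have hW1 := W1 t1 t2 t3 k n hk hkn
    have hW2 := W2 t1 t2 t3 k n hk hkn
    have hsplit : ∑ j ∈ Finset.range (n-1),
          wgt t1 t2 t3 n j * (C j - (α * ((j:ℝ)+1) * harm (j+1) + γ))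
        = (∑ j ∈ Finset.range (n-1), wgt t1 t2 t3 n j * C j)
          - α * (∑ j ∈ Finset.range (n-1), wgt t1 t2 t3 n j * (((j:ℝ)+1) * harm (j+1)))
          - γ * (∑ j ∈ Finset.range (n-1), wgt t1 t2 t3 n j) := by
      rw [Finset.mul_sum, Finset.mul_sum, ← Finset.sum_sub_distrib, ← Finset.sum_sub_distrib]
      apply Finset.sum_congr rfl
      intro j _
      ring
    have key : ((n : ℝ) - k) * (1 + ((t2 : ℝ) + 1) / ((k : ℝ) + 1))
          + (2 * (t1 : ℝ) + t2 + 3) * ((t3 : ℝ) + 1) / (((k : ℝ) + 1) * ((k : ℝ) + 2))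
              * ((n : ℝ) - k - 1)
          + 3 * ((t3 : ℝ) + 1) / ((k : ℝ) + 1)
        = a * ((n:ℝ)+1) - 2*γ := by
      rw [ha, hγ]
      field_simp
      ring
    rw [← hH] at hW2
    rw [hsplit, hW0, hW2, hrec n hn]
    linear_combination key - ((n:ℝ)+1) * hαH
  -- the bound on the residual
  set c : ℝ := ∑ j ∈ Finset.range (w+1), |C j - (α * ((j:ℝ)+1) * harm (j+1) + γ)| with hc
  have hcnn : 0 ≤ c := Finset.sum_nonneg (fun j _ => abs_nonneg _)
  have hc0 : ∀ j : ℕ, j ≤ w → |C j - (α * ((j:ℝ)+1) * harm (j+1) + γ)| ≤ c := by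
    intro j hj
    exact Finset.single_le_sum (f := fun j => |C j - (α * ((j:ℝ)+1) * harm (j+1) + γ)|)
      (fun i _ => abs_nonneg _) (Finset.mem_range.mpr (by omega))
  have hbound : ∀ n : ℕ, |C n - (α * ((n:ℝ)+1) * harm (n+1) + γ)| ≤ c * ((n:ℝ)+1) := by
    intro n
    induction n using Nat.strong_induction_on with
    | _ n ih =>
      rcases le_or_gt n w with h | h
      · calc |C n - (α * ((n:ℝ)+1) * harm (n+1) + γ)| ≤ c := hc0 n h
          _ ≤ c * ((n:ℝ)+1) := le_mul_of_one_le_right hcnn (le_add_of_nonneg_left (Nat.cast_nonneg n))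
      · rw [hD n h]
        calc |∑ j ∈ Finset.range (n-1),
              wgt t1 t2 t3 n j * (C j - (α * ((j:ℝ)+1) * harm (j+1) + γ))|
            ≤ ∑ j ∈ Finset.range (n-1),
              |wgt t1 t2 t3 n j * (C j - (α * ((j:ℝ)+1) * harm (j+1) + γ))| :=
              Finset.abs_sum_le_sum_abs _ _
          _ ≤ ∑ j ∈ Finset.range (n-1), wgt t1 t2 t3 n j * (c * ((j:ℝ)+1)) := by
              apply Finset.sum_le_sum
              intro j hj
              rw [abs_mul, abs_of_nonneg (wgt_nonneg t1 t2 t3 n j)]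
              apply mul_le_mul_of_nonneg_left _ (wgt_nonneg t1 t2 t3 n j)
              exact ih j (by rw [Finset.mem_range] at hj; omega)
          _ = c * ∑ j ∈ Finset.range (n-1), wgt t1 t2 t3 n j * ((j:ℝ)+1) := by
              rw [Finset.mul_sum]
              apply Finset.sum_congr rfl
              intro j _
              ring
          _ = c * ((n:ℝ)+1) := by
              rw [W1 t1 t2 t3 k n hk (le_trans hw (le_of_lt h))]
  -- limits
  have lim3 : Tendsto (fun n : ℕ =>
      (C n - (α * ((n:ℝ)+1) * harm (n+1) + γ)) / ((n:ℝ) * Real.log n)) atTop (𝓝 0) := by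
    apply squeeze_zero_norm' (a := fun n : ℕ => c * (((n:ℝ)+1)/(n:ℝ)) * (1/Real.log n))
    · filter_upwards [eventually_ge_atTop 2] with n hn
      have hn0 : (0:ℝ) < (n:ℝ) := by positivity
      have hlog : (0:ℝ) < Real.log n := by
        apply Real.log_pos
        exact_mod_cast (by omega : 1 < n)
      rw [Real.norm_eq_abs, abs_div, abs_of_pos (by positivity : (0:ℝ) < (n:ℝ) * Real.log n)]
      have h1 : |C n - (α * ((n:ℝ)+1) * harm (n+1) + γ)| / ((n:ℝ) * Real.log n)
          ≤ (c * ((n:ℝ)+1)) / ((n:ℝ) * Real.log n) :=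
        div_le_div_of_nonneg_right (hbound n) (by positivity) |>.trans_eq rfl
      calc |C n - (α * ((n:ℝ)+1) * harm (n+1) + γ)| / ((n:ℝ) * Real.log n)
          ≤ (c * ((n:ℝ)+1)) / ((n:ℝ) * Real.log n) := h1
        _ = c * (((n:ℝ)+1)/(n:ℝ)) * (1/Real.log n) := by
            field_simp
    · have : Tendsto (fun n : ℕ => c * (((n:ℝ)+1)/(n:ℝ)) * (1/Real.log n)) atTop
          (𝓝 (c * 1 * 0)) :=
        (tendsto_const_nhds.mul tendsto_succ_div).mul tendsto_inv_log
      simpa using this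
  have lim1 : Tendsto (fun n : ℕ =>
      α * (((n:ℝ)+1) * harm (n+1) / ((n:ℝ) * Real.log n))) atTop (𝓝 (α * 1)) :=
    tendsto_const_nhds.mul tendsto_main
  have lim2 : Tendsto (fun n : ℕ => γ * (1 / ((n:ℝ) * Real.log n))) atTop (𝓝 (γ * 0)) :=
    tendsto_const_nhds.mul tendsto_inv_nlog
  have total : Tendsto (fun n : ℕ =>
      α * (((n:ℝ)+1) * harm (n+1) / ((n:ℝ) * Real.log n))
        + γ * (1 / ((n:ℝ) * Real.log n))
        + (C n - (α * ((n:ℝ)+1) * harm (n+1) + γ)) / ((n:ℝ) * Real.log n)) atTop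
      (𝓝 (α * 1 + γ * 0 + 0)) := (lim1.add lim2).add lim3
  have hval : α * 1 + γ * 0 + 0 = a / H := by rw [hα]; ring
  rw [hval] at total
  apply total.congr
  intro n
  ring
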